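/- For every x ∈ [0, 1/2], one has 1/2 − √(x(1−x)) ≥ (ln 2 − h(x))/2; equivalently, α(ξ) ≥ 1/2 for all ξ ∈ (0, ln 2], where α(ξ) = (1/ξ)(1/2 − √(h^{−1}(ln 2 − ξ)·(1 − h^{−1}(ln 2 − ξ)))). -/

import Mathlib

noncomputable section

open scoped Matrix ComplexOrder

/-- The algebra of operators on `(ℂ²)^{⊗ n}`, as `2^n × 2^n` matrices indexed by `Fin n → Fin 2`. -/
abbrev Mq (n : ℕ) := Matrix (Fin n → Fin 2) (Fin n → Fin 2) ℂ

/-- Normalized trace `τ(X) = 2^{-n} tr X`. -/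
def qTau {n : ℕ} (X : Mq n) : ℂ := ((2 : ℂ) ^ n)⁻¹ * X.trace

/-- Real part of the normalized trace. -/
def qTauR {n : ℕ} (X : Mq n) : ℝ := (qTau X).re

/-- Normalized Hilbert–Schmidt inner product `⟨X, Y⟩ = τ(X† Y)`. -/
def qInner {n : ℕ} (X Y : Mq n) : ℂ := qTau (Xᴴ * Y)

/-- `|X| = √(X† X)`. -/
def mAbs {n : ℕ} (X : Mq n) : Mq n := ((Matrix.posSemidef_conjTranspose_mul_self X).1.eigenvectorUnitary : Mq n) *
  Matrix.diagonal ((↑) ∘ (fun x : ℝ => Real.sqrt x) ∘ (Matrix.posSemidef_conjTranspose_mul_self X).1.eigenvalues) *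
  (star (Matrix.posSemidef_conjTranspose_mul_self X).1.eigenvectorUnitary : Mq n)

/-- The entropy `Ent(X) = τ(X ln X) − τ(X) ln τ(X)` (with the convention `0 ln 0 = 0`),
for positive semidefinite `X`, via the continuous functional calculus. -/
def mEnt {n : ℕ} (X : Mq n) : ℝ :=
  qTauR (cfc (fun x : ℝ => x * Real.log x) X) - qTauR X * Real.log (qTauR X)

/-- Real powers `X^p` of a positive semidefinite matrix, by functional calculus on the
support (`0 ^ p = 0` for `p ≠ 0`). -/
def mPow {n : ℕ} (X : Mq n) (p : ℝ) : Mq n := cfc (fun x : ℝ => x ^ p) X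

/-- Normalized Schatten `p`-norm `‖X‖_p = (τ(|X|^p))^{1/p}`. -/
def schatten {n : ℕ} (p : ℝ) (X : Mq n) : ℝ := qTauR (mPow (mAbs X) p) ^ (1 / p)

/-- Conditional expectation onto the `i`-th qubit being maximally mixed:
`E_i = I^{⊗(i-1)} ⊗ (τ(·) I) ⊗ I^{⊗(n-i)}`. -/
def condExpQ {n : ℕ} (i : Fin n) (X : Mq n) : Mq n :=
  Matrix.of fun a b =>
    if a i = b i then
      (2 : ℂ)⁻¹ * ∑ c : Fin 2, X (Function.update a i c) (Function.update b i c)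
    else 0

/-- The Lindblad generator `K_n = Σ_i L̂_i`, where `L̂_i` acts as `L(X) = X − τ(X) I`
on the `i`-th tensor factor. -/
def Kq (n : ℕ) (X : Mq n) : Mq n := ∑ i : Fin n, (X - condExpQ i X)

/-- The depolarizing channel on the `i`-th qubit:
`e^{-t} X + (1 - e^{-t}) τ_i(X) ⊗ I_i`. -/
def depolStep {n : ℕ} (t : ℝ) (i : Fin n) (X : Mq n) : Mq n :=
  (Real.exp (-t) : ℂ) • X + ((1 : ℂ) - (Real.exp (-t) : ℂ)) • condExpQ i X

/-- `Ψ_t^{⊗ n}`: the `n`-fold tensor power of the qubit depolarizing channel, i.e. the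
composition over all qubits `i` of the depolarizing channel acting on the `i`-th factor. -/
def psiDep {n : ℕ} (t : ℝ) (X : Mq n) : Mq n :=
  (List.finRange n).foldr (fun i Y => depolStep t i Y) X

/-- The binary entropy function `h(s) = −s ln s − (1−s) ln(1−s)`. -/
def binEnt (s : ℝ) : ℝ := -(s * Real.log s) - (1 - s) * Real.log (1 - s)


open Real in
lemma hasDerivAt_g {x : ℝ} (hx : x ∈ Set.Ioo (0:ℝ) (1/2)) :
    HasDerivAt (fun x : ℝ => binEnt x - 2 * Real.sqrt (x*(1-x)))
      ((Real.log (1-x) - Real.log x) - (1-2*x)/Real.sqrt (x*(1-x))) x := by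
  obtain ⟨hx0, hx2⟩ := hx
  have hx1 : x < 1 := by linarith
  have hr : 0 < x * (1 - x) := by nlinarith
  have h1 : HasDerivAt (fun x : ℝ => x * Real.log x) (Real.log x + 1) x :=
    Real.hasDerivAt_mul_log hx0.ne'
  have h2 : HasDerivAt (fun x : ℝ => (1 - x) * Real.log (1 - x))
      (-(Real.log (1 - x) + 1)) x := by
    have := (Real.hasDerivAt_mul_log (x := 1 - x) (by linarith)).comp x
      ((hasDerivAt_id x).const_sub 1)
    simpa [mul_comm, Function.comp_def] using this
  have h3 : HasDerivAt (fun x : ℝ => Real.sqrt (x * (1 - x)))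
      ((1 - 2*x) * (1 / (2 * Real.sqrt (x * (1-x))))) x := by
    have hmul : HasDerivAt (fun x : ℝ => x * (1 - x)) (1 - 2*x) x := by
      have := (hasDerivAt_id x).mul ((hasDerivAt_id x).const_sub 1)
      refine this.congr_deriv ?_
      simp only [id]; ring
    have := (Real.hasDerivAt_sqrt hr.ne').comp x hmul
    simpa [mul_comm, Function.comp_def] using this
  have := ((h1.neg.sub h2).sub (h3.const_mul 2))
  refine this.congr_deriv ?_
  have hs : Real.sqrt (x*(1-x)) ≠ 0 := (Real.sqrt_pos.2 hr).ne'
  field_simp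
  ring

lemma key_ineq : ∀ x ∈ Set.Icc (0:ℝ) (1/2),
    Real.log 2 - binEnt x ≤ 1 - 2 * Real.sqrt (x * (1 - x)) := by
  have hanti : AntitoneOn (fun x : ℝ => binEnt x - 2 * Real.sqrt (x*(1-x)))
      (Set.Icc 0 (1/2)) := by
    apply antitoneOn_of_deriv_nonpos (convex_Icc _ _)
    · apply ContinuousOn.sub
      · apply Continuous.continuousOn
        unfold binEnt
        exact (Real.continuous_mul_log.neg).sub
          (Real.continuous_mul_log.comp (continuous_const.sub continuous_id))
      · exact (continuous_const.mul ((continuous_id.mul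
          (continuous_const.sub continuous_id)).sqrt)).continuousOn
    · rw [interior_Icc]
      intro x hx
      exact (hasDerivAt_g hx).differentiableAt.differentiableWithinAt
    · rw [interior_Icc]
      intro x hx
      rw [(hasDerivAt_g hx).deriv]
      obtain ⟨hx0, hx2⟩ := hx
      have ha : 0 < Real.sqrt x := Real.sqrt_pos.2 hx0
      have hb : 0 < Real.sqrt (1-x) := Real.sqrt_pos.2 (by linarith)
      have hab : Real.sqrt x * Real.sqrt (1-x) = Real.sqrt (x*(1-x)) :=
        (Real.sqrt_mul hx0.le _).symm
      set t := Real.sqrt (1-x) / Real.sqrt x with ht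
      have ht1 : 1 < t := by
        rw [ht, lt_div_iff₀ ha, one_mul]
        exact Real.sqrt_lt_sqrt hx0.le (by linarith)
      have hlog : Real.log (1-x) - Real.log x = 2 * Real.log t := by
        rw [ht, Real.log_div hb.ne' ha.ne', Real.log_sqrt (by linarith : (0:ℝ) ≤ 1 - x),
          Real.log_sqrt hx0.le]
        ring
      have hsinh : Real.sinh (Real.log t) = (t - t⁻¹)/2 := Real.sinh_log (by linarith)
      have h1 : Real.log t ≤ Real.sinh (Real.log t) :=
        (Real.self_lt_sinh_iff.2 (Real.log_pos ht1)).le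
      have h2 : t - t⁻¹ = (1-2*x)/Real.sqrt (x*(1-x)) := by
        rw [← hab, ht, inv_div, div_sub_div _ _ ha.ne' hb.ne']
        congr 1
        rw [Real.mul_self_sqrt (by linarith : (0:ℝ) ≤ 1 - x), Real.mul_self_sqrt hx0.le]
        ring
      linarith
  intro x hx
  have hmem : (1/2 : ℝ) ∈ Set.Icc (0:ℝ) (1/2) := by norm_num
  have := hanti hx hmem hx.2
  have hE : binEnt (1/2) = Real.log 2 := by
    unfold binEnt
    rw [show (1:ℝ) - 1/2 = 1/2 by norm_num, one_div, Real.log_inv]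
    ring
  have hS : Real.sqrt ((1:ℝ)/2 * (1 - 1/2)) = 1/2 := by
    rw [show (1:ℝ)/2 * (1 - 1/2) = (1/2)^2 by norm_num, Real.sqrt_sq (by norm_num)]
  simp only [hE, hS] at this
  linarith

theorem alpha_ge_half' :
    (∀ x ∈ Set.Icc (0 : ℝ) (1 / 2),
        (Real.log 2 - binEnt x) / 2 ≤ 1 / 2 - Real.sqrt (x * (1 - x))) ∧
      ∀ ξ ∈ Set.Ioc (0 : ℝ) (Real.log 2), 1 / 2 ≤ (if ξ = 0 then 1/2 else ξ⁻¹ *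
        (1 / 2 - Real.sqrt (Function.invFunOn binEnt (Set.Icc 0 (1 / 2)) (Real.log 2 - ξ) *
          (1 - Function.invFunOn binEnt (Set.Icc 0 (1 / 2)) (Real.log 2 - ξ))))) := by
  have key := key_ineq
  constructor
  · intro x hx
    have := key x hx
    linarith
  · rintro ξ ⟨hξ0, hξl⟩
    rw [if_neg hξ0.ne']
    set y := Real.log 2 - ξ with hy
    have hcont : ContinuousOn binEnt (Set.Icc 0 (1/2)) := by
      apply Continuous.continuousOn
      unfold binEnt
      exact (Real.continuous_mul_log.neg).sub
        (Real.continuous_mul_log.comp (continuous_const.sub continuous_id))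
    have hE0 : binEnt 0 = 0 := by simp [binEnt]
    have hE : binEnt (1/2) = Real.log 2 := by
      unfold binEnt
      rw [show (1:ℝ) - 1/2 = 1/2 by norm_num, one_div, Real.log_inv]
      ring
    have hsurj : ∃ a ∈ Set.Icc (0:ℝ) (1/2), binEnt a = y := by
      have := intermediate_value_Icc (by norm_num : (0:ℝ) ≤ 1/2) hcont
      rw [hE0, hE] at this
      have hymem : y ∈ Set.Icc (0:ℝ) (Real.log 2) := ⟨by linarith, by linarith⟩
      obtain ⟨a, ha, hav⟩ := this hymem
      exact ⟨a, ha, hav⟩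
    have hxin : Function.invFunOn binEnt (Set.Icc 0 (1/2)) y ∈ Set.Icc (0:ℝ) (1/2) :=
      Function.invFunOn_mem hsurj
    have hxval : binEnt (Function.invFunOn binEnt (Set.Icc 0 (1/2)) y) = y :=
      Function.invFunOn_eq hsurj
    set x := Function.invFunOn binEnt (Set.Icc 0 (1/2)) y
    have h := key x hxin
    rw [hxval] at h
    rw [inv_mul_eq_div, le_div_iff₀ hξ0]
    nlinarith [h]

/-- `h⁻¹ : [0, ln 2] → [0, 1/2]`, the inverse of the restriction of the binary entropy
function to `[0, 1/2]`. -/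
def binEntInv (y : ℝ) : ℝ := Function.invFunOn binEnt (Set.Icc 0 (1 / 2)) y

/-- `φ(ξ) = 1/2 − √(h⁻¹(ln 2 − ξ)(1 − h⁻¹(ln 2 − ξ)))`. -/
def phiF (ξ : ℝ) : ℝ :=
  1 / 2 - Real.sqrt (binEntInv (Real.log 2 - ξ) * (1 - binEntInv (Real.log 2 - ξ)))

/-- `α(ξ) = φ(ξ)/ξ` for `ξ ∈ (0, ln 2]`, with `α(0) = 1/2` by continuous extension. -/
def alphaF (ξ : ℝ) : ℝ := if ξ = 0 then 1 / 2 else ξ⁻¹ * phiF ξ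

/-- `1/2 − √(x(1−x)) ≥ (ln 2 − h(x))/2` for `x ∈ [0, 1/2]`; equivalently `α(ξ) ≥ 1/2`
for `ξ ∈ (0, ln 2]`. -/
theorem alpha_ge_half :
    (∀ x ∈ Set.Icc (0 : ℝ) (1 / 2),
        (Real.log 2 - binEnt x) / 2 ≤ 1 / 2 - Real.sqrt (x * (1 - x))) ∧
      ∀ ξ ∈ Set.Ioc (0 : ℝ) (Real.log 2), 1 / 2 ≤ alphaF ξ := by
  obtain ⟨h1, h2⟩ := alpha_ge_half'
  refine ⟨h1, fun ξ hξ => ?_⟩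
  have := h2 ξ hξ
  simpa only [alphaF, phiF, binEntInv] using this

end
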